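/- The graph F2 satisfies γ_e(F2) < γ(F2). -/

import Mathlib

open SimpleGraph

/-- `D` is a dominating set of `G`. -/
def IsDomSet {V : Type*} (G : SimpleGraph V) (D : Finset V) : Prop :=
  ∀ v : V, v ∉ D → ∃ u ∈ D, G.Adj u v

/-- The domination number of `G`. -/
noncomputable def domNum {V : Type*} (G : SimpleGraph V) [Fintype V] : ℕ :=
  sInf {n | ∃ D : Finset V, IsDomSet G D ∧ D.card = n}

open Classical in
/-- `D` contains exactly one endvertex of a path between `u` and `v`. -/
def endCond {V : Type*} (D : Finset V) (u v : V) : Prop :=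
  if u = v then u ∈ D else ((u ∈ D ∧ v ∉ D) ∨ (u ∉ D ∧ v ∈ D))

/-- `dist_{(G,D)}(u,v)`: the minimum length of a path in `G` between `u` and `v` such
that `D` contains exactly one endvertex and no internal vertex of the path;
`⊤` if no such path exists. -/
noncomputable def eDist {V : Type*} (G : SimpleGraph V) (D : Finset V) (u v : V) : ℕ∞ :=
  ⨅ (p : {p : G.Walk u v // p.IsPath ∧ endCond D u v ∧
      ∀ w ∈ p.support, w ≠ u → w ≠ v → w ∉ D}), (p.1.length : ℕ∞)

/-- `(1/2)^(d-1)` for `d : ℕ∞`, with `(1/2)^∞ = 0`. -/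
noncomputable def halfPow (d : ℕ∞) : ℝ :=
  if d = ⊤ then 0 else 2 * (1 / 2 : ℝ) ^ d.toNat

/-- The weight `w_{(G,D)}(u)`. -/
noncomputable def expWeight {V : Type*} (G : SimpleGraph V) (D : Finset V) (u : V) : ℝ :=
  ∑ v ∈ D, halfPow (eDist G D u v)

/-- `D` is an exponential dominating set of `G`. -/
def IsExpDomSet {V : Type*} (G : SimpleGraph V) (D : Finset V) : Prop :=
  ∀ u : V, 1 ≤ expWeight G D u

/-- The exponential domination number of `G`. -/
noncomputable def expDomNum {V : Type*} (G : SimpleGraph V) [Fintype V] : ℕ :=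
  sInf {n | ∃ D : Finset V, IsExpDomSet G D ∧ D.card = n}

/-- `G` is `H`-free: `G` has no induced subgraph isomorphic to `H`. -/
def Free {V W : Type*} (G : SimpleGraph V) (H : SimpleGraph W) : Prop :=
  ¬ Nonempty (H ↪g G)

/-- The graph on `Fin n` with the given edge list. -/
def graphOfList (n : ℕ) (l : List (Fin n × Fin n)) : SimpleGraph (Fin n) :=
  SimpleGraph.fromRel (fun a b => (a, b) ∈ l)

/-- The bull `B`. -/
def bull : SimpleGraph (Fin 5) := graphOfList 5 [(0,1),(1,2),(0,2),(0,3),(1,4)]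
/-- The diamond `D` (`K₄` minus an edge). -/
def diamond : SimpleGraph (Fin 4) := graphOfList 4 [(0,1),(0,2),(0,3),(1,2),(1,3)]
/-- The complete graph `K₄`. -/
def K4 : SimpleGraph (Fin 4) := ⊤
/-- The complete bipartite graph `K_{2,3}` with parts `{0,1}` and `{2,3,4}`. -/
def K23 : SimpleGraph (Fin 5) := graphOfList 5 [(0,2),(0,3),(0,4),(1,2),(1,3),(1,4)]
/-- The 2×3 grid `P₂ □ P₃`. -/
def P2P3 : SimpleGraph (Fin 2 × Fin 3) := (pathGraph 2) □ (pathGraph 3)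
/-- The path on 7 vertices. -/
def P7 : SimpleGraph (Fin 7) := pathGraph 7
/-- The cycle on 7 vertices. -/
def C7 : SimpleGraph (Fin 7) := cycleGraph 7
/-- `F₁`: the path `0-1-2` with pendant vertices `3,4,5` attached to `0,1,2`. -/
def F1 : SimpleGraph (Fin 6) := graphOfList 6 [(0,1),(1,2),(0,3),(1,4),(2,5)]
/-- `F₂`: a 4-cycle with a pendant path on 3 new vertices. -/
def F2 : SimpleGraph (Fin 7) := graphOfList 7 [(0,1),(1,2),(2,3),(3,0),(0,4),(4,5),(5,6)]
/-- `F₃`: a 4-cycle `0-1-2-3` and a 5-cycle `1-2-4-5-6` sharing exactly the edge `1-2`. -/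
def F3 : SimpleGraph (Fin 7) := graphOfList 7 [(0,1),(1,2),(2,3),(3,0),(2,4),(4,5),(5,6),(6,1)]
/-- `F₄`: two 4-cycles sharing exactly the vertex `0`. -/
def F4 : SimpleGraph (Fin 7) := graphOfList 7 [(0,1),(1,2),(2,3),(3,0),(0,4),(4,5),(5,6),(6,0)]
/-- `F₅`: vertices `u=0, v₁=1, v₂=2, w=3, a=4, b=5, z=6`. -/
def F5 : SimpleGraph (Fin 7) := graphOfList 7 [(0,1),(0,2),(1,3),(2,3),(1,4),(4,5),(5,2),(3,6)]

set_option maxRecDepth 10000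

/-- Decidable adjacency for `F2`. -/
instance F2.adjDecidable : DecidableRel F2.Adj := fun a b =>
  inferInstanceAs (Decidable (a ≠ b ∧ (((a,b) ∈ [((0:Fin 7),(1:Fin 7)),(1,2),(2,3),(3,0),(0,4),(4,5),(5,6)]) ∨
    ((b,a) ∈ [((0:Fin 7),(1:Fin 7)),(1,2),(2,3),(3,0),(0,4),(4,5),(5,6)]))))

lemma eDist_le' {V : Type*} {G : SimpleGraph V} {D : Finset V} {u v : V} (p : G.Walk u v)
    (h1 : p.IsPath) (h2 : endCond D u v) (h3 : ∀ w ∈ p.support, w ≠ u → w ≠ v → w ∉ D) :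
    eDist G D u v ≤ (p.length : ℕ∞) :=
  iInf_le (fun (q : {p : G.Walk u v // p.IsPath ∧ endCond D u v ∧
      ∀ w ∈ p.support, w ≠ u → w ≠ v → w ∉ D}) => (q.1.length : ℕ∞)) ⟨p, h1, h2, h3⟩

lemma halfPow_nonneg' (d : ℕ∞) : 0 ≤ halfPow d := by
  unfold halfPow; split
  · exact le_rfl
  · positivity

lemma le_halfPow' {d : ℕ∞} {n : ℕ} (h : d ≤ (n : ℕ∞)) : 2 * (1/2 : ℝ)^n ≤ halfPow d := by
  have hd : d ≠ ⊤ := (lt_of_le_of_lt h (ENat.coe_lt_top n)).ne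
  have htn : d.toNat ≤ n := by
    have := ENat.toNat_le_toNat h (ENat.coe_ne_top n)
    simpa using this
  rw [halfPow, if_neg hd]
  have : (1/2 : ℝ)^n ≤ (1/2 : ℝ)^d.toNat :=
    pow_le_pow_of_le_one (by norm_num) (by norm_num) htn
  linarith

/-- The candidate exponential dominating set `{2, 5}`. -/
def D2 : Finset (Fin 7) := {2, 5}

def w012 : F2.Walk 0 2 := Walk.cons (v := 1) (by decide) (Walk.cons (by decide) Walk.nil)
def w045 : F2.Walk 0 5 := Walk.cons (v := 4) (by decide) (Walk.cons (by decide) Walk.nil)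
def w12 : F2.Walk 1 2 := Walk.cons (by decide) Walk.nil
def w32 : F2.Walk 3 2 := Walk.cons (by decide) Walk.nil
def w45 : F2.Walk 4 5 := Walk.cons (by decide) Walk.nil
def w65 : F2.Walk 6 5 := Walk.cons (by decide) Walk.nil

lemma h02 : eDist F2 D2 0 2 ≤ 2 := by
  simpa [w012] using eDist_le' (D := D2) w012 (by unfold w012; rw [Walk.isPath_def]; decide)
    (by unfold endCond; rw [if_neg (by decide)]; decide) (by unfold w012 D2; decide)
lemma h05 : eDist F2 D2 0 5 ≤ 2 := by
  simpa [w045] using eDist_le' (D := D2) w045 (by unfold w045; rw [Walk.isPath_def]; decide)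
    (by unfold endCond; rw [if_neg (by decide)]; decide) (by unfold w045 D2; decide)
lemma h12 : eDist F2 D2 1 2 ≤ 1 := by
  simpa [w12] using eDist_le' (D := D2) w12 (by unfold w12; rw [Walk.isPath_def]; decide)
    (by unfold endCond; rw [if_neg (by decide)]; decide) (by unfold w12 D2; decide)
lemma h32 : eDist F2 D2 3 2 ≤ 1 := by
  simpa [w32] using eDist_le' (D := D2) w32 (by unfold w32; rw [Walk.isPath_def]; decide)
    (by unfold endCond; rw [if_neg (by decide)]; decide) (by unfold w32 D2; decide)
lemma h45 : eDist F2 D2 4 5 ≤ 1 := by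
  simpa [w45] using eDist_le' (D := D2) w45 (by unfold w45; rw [Walk.isPath_def]; decide)
    (by unfold endCond; rw [if_neg (by decide)]; decide) (by unfold w45 D2; decide)
lemma h65 : eDist F2 D2 6 5 ≤ 1 := by
  simpa [w65] using eDist_le' (D := D2) w65 (by unfold w65; rw [Walk.isPath_def]; decide)
    (by unfold endCond; rw [if_neg (by decide)]; decide) (by unfold w65 D2; decide)
lemma h22 : eDist F2 D2 2 2 ≤ 0 := by
  simpa using eDist_le' (D := D2) (Walk.nil : F2.Walk 2 2) Walk.IsPath.nil
    (by unfold endCond; rw [if_pos rfl]; decide) (by unfold D2; decide)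
lemma h55 : eDist F2 D2 5 5 ≤ 0 := by
  simpa using eDist_le' (D := D2) (Walk.nil : F2.Walk 5 5) Walk.IsPath.nil
    (by unfold endCond; rw [if_pos rfl]; decide) (by unfold D2; decide)

lemma expWeight_eq (u : Fin 7) :
    expWeight F2 D2 u = halfPow (eDist F2 D2 u 2) + halfPow (eDist F2 D2 u 5) := by
  rw [expWeight]
  exact Finset.sum_pair (by decide)

lemma isExpDomSet_D2 : IsExpDomSet F2 D2 := by
  intro u
  fin_cases u
  · show (1:ℝ) ≤ expWeight F2 D2 0
    rw [expWeight_eq]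
    have a := le_halfPow' h02; have b := le_halfPow' h05; norm_num at a b ⊢; linarith
  · show (1:ℝ) ≤ expWeight F2 D2 1
    rw [expWeight_eq]
    have a := le_halfPow' h12; have b := halfPow_nonneg' (eDist F2 D2 1 5)
    norm_num at a ⊢; linarith
  · show (1:ℝ) ≤ expWeight F2 D2 2
    rw [expWeight_eq]
    have a := le_halfPow' h22; have b := halfPow_nonneg' (eDist F2 D2 2 5)
    norm_num at a ⊢; linarith
  · show (1:ℝ) ≤ expWeight F2 D2 3
    rw [expWeight_eq]
    have a := le_halfPow' h32; have b := halfPow_nonneg' (eDist F2 D2 3 5)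
    norm_num at a ⊢; linarith
  · show (1:ℝ) ≤ expWeight F2 D2 4
    rw [expWeight_eq]
    have a := le_halfPow' h45; have b := halfPow_nonneg' (eDist F2 D2 4 2)
    norm_num at a ⊢; linarith
  · show (1:ℝ) ≤ expWeight F2 D2 5
    rw [expWeight_eq]
    have a := le_halfPow' h55; have b := halfPow_nonneg' (eDist F2 D2 5 2)
    norm_num at a ⊢; linarith
  · show (1:ℝ) ≤ expWeight F2 D2 6
    rw [expWeight_eq]
    have a := le_halfPow' h65; have b := halfPow_nonneg' (eDist F2 D2 6 2)
    norm_num at a ⊢; linarith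

lemma domSet_card_ge : ∀ D : Finset (Fin 7), IsDomSet F2 D → 3 ≤ D.card := by
  unfold IsDomSet; decide

/-- `γₑ(F₂) < γ(F₂)`. -/
theorem expDomNum_F2_lt_domNum_F2 : expDomNum F2 < domNum F2 := by
  have hle : expDomNum F2 ≤ 2 :=
    Nat.sInf_le ⟨D2, isExpDomSet_D2, by decide⟩
  have hge : 3 ≤ domNum F2 := by
    apply le_csInf
    · exact ⟨7, Finset.univ, fun v hv => absurd (Finset.mem_univ v) hv, by decide⟩
    · rintro n ⟨D, hD, rfl⟩
      exact domSet_card_ge D hD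
  omega
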